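/- Differential-inequality boundedness lemma: Let X be a Banach space, ε₀ ∈ (0,1], and f ∈ C¹((0,ε₀], X). Suppose there exist γ₁ ∈ [0,1], γ₂ ∈ [0,1), γ₃ ∈ ℝ and c₁, c₂ > 0 such that for all ε ∈ (0,ε₀): ‖f'(ε)‖ ≤ c₁ ε^{-γ₂}(1 + ‖f(ε)‖^{γ₁}) and ‖f(ε)‖ ≤ c₂ ε^{-γ₃}. Then f has a limit at 0 and there exists c ≥ 0, depending only on ε₀, γ₁, γ₂, γ₃, c₁, c₂, such that ‖f(ε)‖ ≤ c for all ε ∈ (0,ε₀). -/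

import Mathlib

open Set Filter MeasureTheory

set_option maxHeartbeats 2000000 in
/-- Differential-inequality boundedness lemma (Jensen–Mourre–Perry): if
`f ∈ C¹((0,ε₀], X)` satisfies `‖f'(ε)‖ ≤ c₁ ε^{-γ₂}(1 + ‖f(ε)‖^{γ₁})` and
`‖f(ε)‖ ≤ c₂ ε^{-γ₃}` with `γ₁ ∈ [0,1]`, `γ₂ ∈ [0,1)`, then `f` has a limit at `0`
and is bounded by a constant `c` depending only on `ε₀, γ₁, γ₂, γ₃, c₁, c₂`. -/
theorem stmt_7 (ε₀ γ₁ γ₂ γ₃ c₁ c₂ : ℝ) (hε₀ : ε₀ ∈ Ioc (0 : ℝ) 1)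
    (hγ₁ : γ₁ ∈ Icc (0 : ℝ) 1) (hγ₂ : γ₂ ∈ Ico (0 : ℝ) 1)
    (hc₁ : 0 < c₁) (hc₂ : 0 < c₂) :
    ∃ c : ℝ, 0 ≤ c ∧
      ∀ (X : Type) [NormedAddCommGroup X] [NormedSpace ℝ X] [CompleteSpace X]
        (f f' : ℝ → X),
        (∀ ε ∈ Ioc (0 : ℝ) ε₀, HasDerivAt f (f' ε) ε) →
        ContinuousOn f' (Ioc (0 : ℝ) ε₀) →
        (∀ ε ∈ Ioo (0 : ℝ) ε₀, ‖f' ε‖ ≤ c₁ * ε ^ (-γ₂) * (1 + ‖f ε‖ ^ γ₁)) →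
        (∀ ε ∈ Ioo (0 : ℝ) ε₀, ‖f ε‖ ≤ c₂ * ε ^ (-γ₃)) →
        (∃ L : X, Tendsto f (nhdsWithin 0 (Ioi 0)) (nhds L)) ∧
        ∀ ε ∈ Ioo (0 : ℝ) ε₀, ‖f ε‖ ≤ c := by
  obtain ⟨hε₀0, hε₀1⟩ := hε₀
  obtain ⟨hγ₁0, hγ₁1⟩ := hγ₁
  obtain ⟨hγ₂0, hγ₂1⟩ := hγ₂
  set r : ℝ := ε₀ / 2 with hr_def
  have hr0 : 0 < r := by positivity
  have hrε : r < ε₀ := by rw [hr_def]; linarith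
  have hr1 : r ≤ 1 := by rw [hr_def]; linarith
  set δ : ℝ := (1 - γ₂) / 2 with hδ_def
  have hδ0 : 0 < δ := by rw [hδ_def]; linarith
  have hγ₂δ : γ₂ = 1 - 2 * δ := by rw [hδ_def]; ring
  set M₀ : ℝ := c₂ * r ^ (-|γ₃|) with hM₀_def
  have hM₀0 : 0 < M₀ := by
    rw [hM₀_def]; exact mul_pos hc₂ (Real.rpow_pos_of_pos hr0 _)
  set Φ : ℝ := M₀ + 2 * c₁ / δ + 1 with hΦ_def
  have hc₁δ : 0 ≤ 2 * c₁ / δ := by positivity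
  have hΦ1 : 1 ≤ Φ := by rw [hΦ_def]; linarith
  have hΦM₀ : M₀ ≤ Φ := by rw [hΦ_def]; linarith
  set N : ℕ := ⌈max γ₃ 0 / δ⌉₊ with hN_def
  have hNδ : max γ₃ 0 ≤ N * δ := by
    have h1 : max γ₃ 0 / δ ≤ (N : ℝ) := Nat.le_ceil _
    calc max γ₃ 0 = max γ₃ 0 / δ * δ := by field_simp
    _ ≤ (N : ℝ) * δ := mul_le_mul_of_nonneg_right h1 hδ0.le
  set KN : ℝ := Φ ^ N * max c₂ 1 with hKN_def
  have hKN1 : 1 ≤ KN := by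
    rw [hKN_def]
    calc (1:ℝ) = 1 * 1 := by ring
    _ ≤ Φ ^ N * max c₂ 1 :=
      mul_le_mul (one_le_pow₀ hΦ1) (le_max_right _ _) zero_le_one
        (le_trans zero_le_one (one_le_pow₀ hΦ1))
  have hc0 : (0:ℝ) ≤ M₀ + 2 * c₁ * KN / δ :=
    add_nonneg hM₀0.le (div_nonneg (mul_nonneg (by linarith) (by linarith)) hδ0.le)
  clear_value r δ M₀ Φ N KN
  refine ⟨M₀ + 2 * c₁ * KN / δ, hc0, ?_⟩
  intro X _ _ _ f f' hderiv hcont hb1 hb2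
  -- crude bound away from 0
  have hMr : ∀ ε : ℝ, r ≤ ε → ε ∈ Ioo (0:ℝ) ε₀ → ‖f ε‖ ≤ M₀ := by
    intro ε hrε' hε
    refine (hb2 ε hε).trans ?_
    have h1 : ε ^ (-γ₃) ≤ ε ^ (-|γ₃|) :=
      Real.rpow_le_rpow_of_exponent_ge hε.1 (le_trans hε.2.le hε₀1)
        (neg_le_neg (le_abs_self γ₃))
    have h2 : ε ^ (-|γ₃|) ≤ r ^ (-|γ₃|) :=
      Real.rpow_le_rpow_of_nonpos hr0 hrε' (neg_nonpos.mpr (abs_nonneg _))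
    rw [hM₀_def]
    exact mul_le_mul_of_nonneg_left (h1.trans h2) hc₂.le
  have hfr : ‖f r‖ ≤ M₀ := hMr r le_rfl ⟨hr0, hrε⟩
  have hsub : ∀ ε : ℝ, ε ∈ Ioc (0:ℝ) r → Icc ε r ⊆ Ioc (0:ℝ) ε₀ := fun ε hε t ht =>
    ⟨lt_of_lt_of_le hε.1 ht.1, le_trans ht.2 hrε.le⟩
  -- fundamental theorem of calculus
  have hftc : ∀ ε : ℝ, ε ∈ Ioc (0:ℝ) r → ∫ t in ε..r, f' t = f r - f ε := by
    intro ε hε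
    refine intervalIntegral.integral_eq_sub_of_hasDerivAt (fun t ht => ?_) ?_
    · rw [uIcc_of_le hε.2] at ht; exact hderiv t (hsub ε hε ht)
    · exact (hcont.mono (hsub ε hε)).intervalIntegrable_of_Icc hε.2
  -- key integral estimate
  have hkey : ∀ (ε D β : ℝ), ε ∈ Ioc (0:ℝ) r → β ≠ 1 → 0 ≤ D →
      (∀ t ∈ Icc ε r, ‖f' t‖ ≤ D * t ^ (-β)) →
      ‖f ε‖ ≤ M₀ + D * |(r ^ (-β + 1) - ε ^ (-β + 1)) / (-β + 1)| := by
    intro ε D β hε hβ hD hb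
    have h0 : (0:ℝ) ∉ uIcc ε r := by
      rw [uIcc_of_le hε.2]
      exact fun h => absurd h.1 (not_le.mpr hε.1)
    have hg_int : IntervalIntegrable (fun t => D * t ^ (-β)) volume ε r :=
      (intervalIntegral.intervalIntegrable_rpow (Or.inr h0)).const_mul D
    have hnorm : ‖∫ t in ε..r, f' t‖ ≤ |∫ t in ε..r, D * t ^ (-β)| := by
      refine intervalIntegral.norm_integral_le_abs_of_norm_le ?_ hg_int
      refine (ae_restrict_mem measurableSet_uIoc).mono (fun t ht => ?_)
      rw [uIoc_of_le hε.2] at ht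
      exact hb t ⟨ht.1.le, ht.2⟩
    have hβ' : (-β : ℝ) ≠ -1 := by intro h; exact hβ (by linarith)
    have hval : ∫ t in ε..r, D * t ^ (-β) =
        D * ((r ^ (-β + 1) - ε ^ (-β + 1)) / (-β + 1)) := by
      rw [intervalIntegral.integral_const_mul,
        integral_rpow (Or.inr ⟨hβ', h0⟩)]
    have hfe : f ε = f r - ∫ t in ε..r, f' t := by
      rw [hftc ε hε]; abel
    calc ‖f ε‖ = ‖f r - ∫ t in ε..r, f' t‖ := by rw [← hfe]
    _ ≤ ‖f r‖ + ‖∫ t in ε..r, f' t‖ := norm_sub_le _ _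
    _ ≤ M₀ + |∫ t in ε..r, D * t ^ (-β)| := add_le_add hfr hnorm
    _ = M₀ + D * |(r ^ (-β + 1) - ε ^ (-β + 1)) / (-β + 1)| := by
        rw [hval, abs_mul, abs_of_nonneg hD]
  -- pointwise derivative bound from a power bound on f
  have hptw : ∀ (K a : ℝ), 1 ≤ K → 0 ≤ a →
      (∀ ε ∈ Ioo (0:ℝ) ε₀, ‖f ε‖ ≤ K * ε ^ (-a)) →
      ∀ t ∈ Ioo (0:ℝ) ε₀, ‖f' t‖ ≤ 2 * c₁ * K * t ^ (-(γ₂ + γ₁ * a)) := by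
    intro K a hK ha hbd t ht
    have ht0 : 0 < t := ht.1
    have ht1 : t ≤ 1 := le_trans ht.2.le hε₀1
    have h1 : ‖f t‖ ^ γ₁ ≤ K * t ^ (-(γ₁ * a)) := by
      have e1 : ‖f t‖ ^ γ₁ ≤ (K * t ^ (-a)) ^ γ₁ :=
        Real.rpow_le_rpow (norm_nonneg _) (hbd t ht) hγ₁0
      have e2 : (K * t ^ (-a)) ^ γ₁ = K ^ γ₁ * t ^ (-(γ₁ * a)) := by
        rw [Real.mul_rpow (by linarith) (Real.rpow_nonneg ht0.le _),
          ← Real.rpow_mul ht0.le, show -a * γ₁ = -(γ₁ * a) by ring]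
      have e3 : K ^ γ₁ ≤ K := by
        calc K ^ γ₁ ≤ K ^ (1:ℝ) := Real.rpow_le_rpow_of_exponent_le hK hγ₁1
        _ = K := Real.rpow_one K
      calc ‖f t‖ ^ γ₁ ≤ K ^ γ₁ * t ^ (-(γ₁ * a)) := by rw [← e2]; exact e1
      _ ≤ K * t ^ (-(γ₁ * a)) :=
        mul_le_mul_of_nonneg_right e3 (Real.rpow_nonneg ht0.le _)
    have h2 : (1:ℝ) ≤ K * t ^ (-(γ₁ * a)) := by
      have h3 : (1:ℝ) ≤ t ^ (-(γ₁ * a)) :=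
        Real.one_le_rpow_of_pos_of_le_one_of_nonpos ht0 ht1
          (neg_nonpos.mpr (mul_nonneg hγ₁0 ha))
      calc (1:ℝ) ≤ t ^ (-(γ₁ * a)) := h3
      _ ≤ K * t ^ (-(γ₁ * a)) :=
        le_mul_of_one_le_left (Real.rpow_nonneg ht0.le _) hK
    calc ‖f' t‖ ≤ c₁ * t ^ (-γ₂) * (1 + ‖f t‖ ^ γ₁) := hb1 t ht
    _ ≤ c₁ * t ^ (-γ₂) * (2 * K * t ^ (-(γ₁ * a))) := by
        refine mul_le_mul_of_nonneg_left (by linarith) ?_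
        exact mul_nonneg hc₁.le (Real.rpow_nonneg ht0.le _)
    _ = 2 * c₁ * K * t ^ (-(γ₂ + γ₁ * a)) := by
        rw [neg_add, Real.rpow_add ht0]; ring
  -- the contraction step
  have hstep : ∀ (K a : ℝ), 1 ≤ K → 0 ≤ a →
      (∀ ε ∈ Ioo (0:ℝ) ε₀, ‖f ε‖ ≤ K * ε ^ (-a)) →
      ∀ ε ∈ Ioo (0:ℝ) ε₀, ‖f ε‖ ≤ Φ * K * ε ^ (-max (a - δ) δ) := by
    intro K a hK ha hbd ε hε
    set a' := max (a - δ) δ with ha'_def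
    have ha'δ : δ ≤ a' := le_max_right _ _
    have hε1 : ε ≤ 1 := le_trans hε.2.le hε₀1
    have hεr1 : (1:ℝ) ≤ ε ^ (-a') :=
      Real.one_le_rpow_of_pos_of_le_one_of_nonpos hε.1 hε1 (neg_nonpos.mpr (by linarith))
    have hE0 : (0:ℝ) ≤ ε ^ (-a') := Real.rpow_nonneg hε.1.le _
    have hΦK : (0:ℝ) ≤ Φ * K := mul_nonneg (by linarith) (by linarith)
    have hcK : (0:ℝ) ≤ 2 * c₁ * K := mul_nonneg (by linarith) (by linarith)
    rcases le_or_gt ε r with hεr | hεr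
    · set β := max (γ₂ + γ₁ * a) (1 + δ) with hβ_def
      have hβ1 : 1 + δ ≤ β := le_max_right _ _
      have hβne : β ≠ 1 := by intro h; rw [h] at hβ1; linarith
      have hβa' : β - 1 ≤ a' := by
        have hga : γ₁ * a ≤ a := mul_le_of_le_one_left ha hγ₁1
        have h1 : a - δ ≤ a' := le_max_left _ _
        rw [hβ_def, sub_le_iff_le_add]
        exact max_le (by linarith) (by linarith)
      have hder : ∀ t ∈ Icc ε r, ‖f' t‖ ≤ 2 * c₁ * K * t ^ (-β) := by
        intro t ht
        have htm : t ∈ Ioo (0:ℝ) ε₀ := ⟨lt_of_lt_of_le hε.1 ht.1, lt_of_le_of_lt ht.2 hrε⟩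
        refine (hptw K a hK ha hbd t htm).trans ?_
        refine mul_le_mul_of_nonneg_left ?_ hcK
        exact Real.rpow_le_rpow_of_exponent_ge htm.1 (le_trans htm.2.le hε₀1)
          (neg_le_neg (le_max_left _ _))
      have hmain := hkey ε (2 * c₁ * K) β ⟨hε.1, hεr⟩ hβne hcK hder
      have habs : |(r ^ (-β + 1) - ε ^ (-β + 1)) / (-β + 1)| ≤ ε ^ (-a') / δ := by
        rw [abs_div]
        have hd1 : δ ≤ |(-β + 1)| := by
          rw [abs_of_nonpos (by linarith)]; linarith
        have hre : r ^ (-β + 1) ≤ ε ^ (-β + 1) :=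
          Real.rpow_le_rpow_of_nonpos hε.1 hεr (by linarith)
        have hnum : |r ^ (-β + 1) - ε ^ (-β + 1)| ≤ ε ^ (-a') := by
          rw [abs_of_nonpos (by linarith)]
          have h1 : ε ^ (-β + 1) ≤ ε ^ (-a') :=
            Real.rpow_le_rpow_of_exponent_ge hε.1 hε1 (by linarith)
          have h2 : (0:ℝ) ≤ r ^ (-β + 1) := Real.rpow_nonneg hr0.le _
          linarith
        exact div_le_div₀ hE0 hnum hδ0 hd1
      have h2 : 2 * c₁ * K * |(r ^ (-β + 1) - ε ^ (-β + 1)) / (-β + 1)| ≤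
          2 * c₁ * K * (ε ^ (-a') / δ) :=
        mul_le_mul_of_nonneg_left habs hcK
      have hKE : (1:ℝ) ≤ K * ε ^ (-a') := by
        calc (1:ℝ) = 1 * 1 := by ring
        _ ≤ K * ε ^ (-a') := mul_le_mul hK hεr1 zero_le_one (by linarith)
      have hfin : M₀ + 2 * c₁ * K * (ε ^ (-a') / δ) ≤ Φ * K * ε ^ (-a') := by
        rw [hΦ_def]
        have he1 : 2 * c₁ * K * (ε ^ (-a') / δ) = 2 * c₁ / δ * (K * ε ^ (-a')) := by
          field_simp
        have he2 : (M₀ + 2 * c₁ / δ + 1) * K * ε ^ (-a') =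
            M₀ * (K * ε ^ (-a')) + 2 * c₁ / δ * (K * ε ^ (-a')) + K * ε ^ (-a') := by
          ring
        rw [he1, he2]
        have h3 : M₀ ≤ M₀ * (K * ε ^ (-a')) :=
          le_mul_of_one_le_right hM₀0.le hKE
        linarith
      linarith
    · refine (hMr ε hεr.le hε).trans ?_
      calc M₀ ≤ Φ * K := le_trans hΦM₀ (le_mul_of_one_le_right (by linarith) hK)
      _ ≤ Φ * K * ε ^ (-a') := le_mul_of_one_le_right hΦK hεr1
  -- the iteration
  have hiter : ∀ n : ℕ, ∃ a : ℝ, 0 ≤ a ∧ a ≤ max (max γ₃ 0 - n * δ) δ ∧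
      ∀ ε ∈ Ioo (0:ℝ) ε₀, ‖f ε‖ ≤ Φ ^ n * max c₂ 1 * ε ^ (-a) := by
    intro n
    induction n with
    | zero =>
      refine ⟨max γ₃ 0, le_max_right _ _, ?_, fun ε hε => ?_⟩
      · simp only [Nat.cast_zero, zero_mul, sub_zero]
        exact le_max_left _ _
      · have hε1 : ε ≤ 1 := le_trans hε.2.le hε₀1
        have h1 : ε ^ (-γ₃) ≤ ε ^ (-max γ₃ 0) :=
          Real.rpow_le_rpow_of_exponent_ge hε.1 hε1 (neg_le_neg (le_max_left _ _))
        refine (hb2 ε hε).trans ?_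
        simp only [pow_zero, one_mul]
        exact mul_le_mul (le_max_left _ _) h1 (Real.rpow_nonneg hε.1.le _)
          (le_trans hc₂.le (le_max_left _ _))
    | succ n ih =>
      obtain ⟨a, ha0, hale, hbd⟩ := ih
      have hK1 : 1 ≤ Φ ^ n * max c₂ 1 := by
        calc (1:ℝ) = 1 * 1 := by ring
        _ ≤ Φ ^ n * max c₂ 1 :=
          mul_le_mul (one_le_pow₀ hΦ1) (le_max_right _ _) zero_le_one
            (le_trans zero_le_one (one_le_pow₀ hΦ1))
      refine ⟨max (a - δ) δ, le_trans hδ0.le (le_max_right _ _), ?_, fun ε hε => ?_⟩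
      · refine max_le ?_ (le_max_right _ _)
        rcases le_max_iff.mp hale with h | h
        · refine le_trans ?_ (le_max_left _ _)
          push_cast; linarith
        · exact le_trans (by linarith) (le_max_right _ _)
      · have h := hstep (Φ ^ n * max c₂ 1) a hK1 ha0 hbd ε hε
        calc ‖f ε‖ ≤ Φ * (Φ ^ n * max c₂ 1) * ε ^ (-max (a - δ) δ) := h
        _ = Φ ^ (n + 1) * max c₂ 1 * ε ^ (-max (a - δ) δ) := by ring
  -- after N steps the exponent is at most δ
  obtain ⟨a, ha0, haN, hbdN⟩ := hiter N
  have haδ : a ≤ δ := haN.trans (max_le (by linarith) le_rfl)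
  have hbdδ : ∀ ε ∈ Ioo (0:ℝ) ε₀, ‖f ε‖ ≤ KN * ε ^ (-δ) := by
    intro ε hε
    refine (hbdN ε hε).trans ?_
    rw [hKN_def]
    refine mul_le_mul_of_nonneg_left ?_ (by rw [← hKN_def]; linarith)
    exact Real.rpow_le_rpow_of_exponent_ge hε.1 (le_trans hε.2.le hε₀1)
      (neg_le_neg haδ)
  have hcKN : (0:ℝ) ≤ 2 * c₁ * KN := mul_nonneg (by linarith) (by linarith)
  -- final uniform bound
  have hfinal : ∀ ε ∈ Ioo (0:ℝ) ε₀, ‖f ε‖ ≤ M₀ + 2 * c₁ * KN / δ := by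
    intro ε hε
    have hε1 : ε ≤ 1 := le_trans hε.2.le hε₀1
    rcases le_or_gt ε r with hεr | hεr
    · set β := γ₂ + γ₁ * δ with hβ_def
      have hβδ : β ≤ 1 - δ := by
        have : γ₁ * δ ≤ δ := mul_le_of_le_one_left hδ0.le hγ₁1
        rw [hβ_def]; linarith
      have hβ0 : 0 ≤ β := by
        rw [hβ_def]; exact add_nonneg hγ₂0 (mul_nonneg hγ₁0 hδ0.le)
      have hβne : β ≠ 1 := by intro h; rw [h] at hβδ; linarith
      have hder : ∀ t ∈ Icc ε r, ‖f' t‖ ≤ 2 * c₁ * KN * t ^ (-β) := fun t ht =>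
        hptw KN δ hKN1 hδ0.le hbdδ t ⟨lt_of_lt_of_le hε.1 ht.1, lt_of_le_of_lt ht.2 hrε⟩
      have hmain := hkey ε (2 * c₁ * KN) β ⟨hε.1, hεr⟩ hβne hcKN hder
      have habs : |(r ^ (-β + 1) - ε ^ (-β + 1)) / (-β + 1)| ≤ 1 / δ := by
        rw [abs_div]
        have hd1 : δ ≤ |(-β + 1)| := by
          rw [abs_of_nonneg (by linarith)]; linarith
        have h1 : r ^ (-β + 1) ≤ 1 := Real.rpow_le_one hr0.le hr1 (by linarith)
        have h2 : ε ^ (-β + 1) ≤ 1 := Real.rpow_le_one hε.1.le hε1 (by linarith)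
        have h3 : (0:ℝ) ≤ r ^ (-β + 1) := Real.rpow_nonneg hr0.le _
        have h4 : (0:ℝ) ≤ ε ^ (-β + 1) := Real.rpow_nonneg hε.1.le _
        have hnum : |r ^ (-β + 1) - ε ^ (-β + 1)| ≤ 1 :=
          abs_le.mpr ⟨by linarith, by linarith⟩
        exact div_le_div₀ zero_le_one hnum hδ0 hd1
      have h2 : 2 * c₁ * KN * |(r ^ (-β + 1) - ε ^ (-β + 1)) / (-β + 1)| ≤
          2 * c₁ * KN * (1 / δ) :=
        mul_le_mul_of_nonneg_left habs hcKN
      have h3 : 2 * c₁ * KN * (1 / δ) = 2 * c₁ * KN / δ := by ring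
      linarith
    · refine (hMr ε hεr.le hε).trans ?_
      have : (0:ℝ) ≤ 2 * c₁ * KN / δ := div_nonneg hcKN hδ0.le
      linarith
  refine ⟨?_, hfinal⟩
  -- existence of the limit at 0
  set c : ℝ := M₀ + 2 * c₁ * KN / δ with hc_def
  set C : ℝ := c₁ * (1 + c ^ γ₁) with hC_def
  have hder2 : ∀ t ∈ Ioc (0:ℝ) r, ‖f' t‖ ≤ C * t ^ (-γ₂) := by
    intro t ht
    have htm : t ∈ Ioo (0:ℝ) ε₀ := ⟨ht.1, lt_of_le_of_lt ht.2 hrε⟩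
    refine (hb1 t htm).trans ?_
    have h1 : ‖f t‖ ^ γ₁ ≤ c ^ γ₁ :=
      Real.rpow_le_rpow (norm_nonneg _) (hfinal t htm) hγ₁0
    calc c₁ * t ^ (-γ₂) * (1 + ‖f t‖ ^ γ₁) ≤ c₁ * t ^ (-γ₂) * (1 + c ^ γ₁) := by
          refine mul_le_mul_of_nonneg_left (by linarith) ?_
          exact mul_nonneg hc₁.le (Real.rpow_nonneg ht.1.le _)
    _ = C * t ^ (-γ₂) := by rw [hC_def]; ring
  have hint_g : IntegrableOn (fun t => C * t ^ (-γ₂)) (Ioc (0:ℝ) r) volume := by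
    have h := (intervalIntegral.intervalIntegrable_rpow'
      (show (-1:ℝ) < -γ₂ by linarith) (a := 0) (b := r)).const_mul C
    rwa [intervalIntegrable_iff_integrableOn_Ioc_of_le hr0.le] at h
  have hmeas : AEStronglyMeasurable f' (volume.restrict (Ioc (0:ℝ) r)) :=
    (hcont.mono (fun t ht => ⟨ht.1, le_trans ht.2 hrε.le⟩)).aestronglyMeasurable
      measurableSet_Ioc
  have hint_f' : IntegrableOn f' (Ioc (0:ℝ) r) volume :=
    Integrable.mono' hint_g hmeas ((ae_restrict_mem measurableSet_Ioc).mono hder2)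
  set g : ℝ → X := (Ioc (0:ℝ) r).indicator f' with hg_def
  have hint_g0 : Integrable g volume :=
    (integrable_indicator_iff measurableSet_Ioc).mpr hint_f'
  have hcontP : ContinuousOn (fun x => ∫ t in x..r, g t) (Icc (0:ℝ) r) := by
    have h := intervalIntegral.continuousOn_primitive_interval_left
      (f := g) (a := (0:ℝ)) (b := r) (hint_g0.integrableOn)
    rwa [uIcc_of_le hr0.le] at h
  have htend0 : Tendsto (fun x => ∫ t in x..r, g t) (nhdsWithin (0:ℝ) (Ioi 0))
      (nhds (∫ t in (0:ℝ)..r, g t)) :=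
    (hcontP 0 ⟨le_rfl, hr0.le⟩).mono_left
      (nhdsWithin_le_of_mem (Icc_mem_nhdsGT hr0))
  refine ⟨f r - ∫ t in (0:ℝ)..r, g t, ?_⟩
  have heq : (fun ε => f r - ∫ t in ε..r, g t) =ᶠ[nhdsWithin (0:ℝ) (Ioi 0)] f := by
    filter_upwards [Ioc_mem_nhdsGT_of_mem (show (0:ℝ) ∈ Ico (0:ℝ) r from ⟨le_rfl, hr0⟩)]
      with ε hε
    have h1 : ∫ t in ε..r, g t = ∫ t in ε..r, f' t := by
      refine intervalIntegral.integral_congr (fun t ht => ?_)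
      rw [uIcc_of_le hε.2] at ht
      rw [hg_def]
      exact indicator_of_mem (show t ∈ Ioc (0:ℝ) r from ⟨lt_of_lt_of_le hε.1 ht.1, ht.2⟩) f'
    rw [h1, hftc ε hε]
    abel
  exact (tendsto_const_nhds.sub htend0).congr' heq
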